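/- arXiv:2007.10143 — 3 statements merged into one kernel-verified Lean document; each statement's English description precedes it below -/
import Mathlib

section
/- Fix a class a ∈ Fin n with n ≥ 2. Suppose the contextualizations c i (i ∈ Fin n) are pairwise orthogonal (⟪c i, c j⟫ = 0 whenever i ≠ j) and c a ≠ 0. Then the gradient of the 1-shot support cross-entropy loss g with respect to the head weight of class a, evaluated at ψ a, satisfies ⟪c a, − gradient g (ψ a)⟫ > 0; that is, the inner-loop update direction for the head weights of class a is positively correlated with the contextualization of its support example. -/
open RealInnerProductSpace

set_option maxHeartbeats 1000000 in
/-- Fix a class `a ∈ Fin n` with `n ≥ 2`. Suppose the contextualizations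
`c i` are pairwise orthogonal and `c a ≠ 0`. Then the gradient of the 1-shot support
cross-entropy loss `g` with respect to the head weight of class `a`, evaluated at `ψ a`,
satisfies `⟪c a, -gradient g (ψ a)⟫ > 0`: the inner-loop update direction for the head
weights of class `a` is positively correlated with the contextualization of its support
example. -/
theorem head_update_positively_correlated
    (n d : ℕ) (hn : 2 ≤ n) (a : Fin n)
    (c ψ : Fin n → EuclideanSpace ℝ (Fin d)) (b : Fin n → ℝ)
    (hortho : ∀ i j : Fin n, i ≠ j → ⟪c i, c j⟫ = 0)
    (hca : c a ≠ 0)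
    (g : EuclideanSpace ℝ (Fin d) → ℝ)
    (hg : g = fun w =>
      ∑ a'' : Fin n,
        (-(⟪Function.update ψ a w a'', c a''⟫ + b a'') +
          Real.log (∑ a' : Fin n,
            Real.exp (⟪Function.update ψ a w a', c a''⟫ + b a')))) :
    0 < ⟪c a, -gradient g (ψ a)⟫ := by
  classical
  set w₀ : EuclideanSpace ℝ (Fin d) := ψ a with hw₀
  set t : Fin n → ℝ := fun a'' => ⟪ψ a, c a''⟫ + b a with ht
  set Z : Fin n → ℝ := fun a'' =>
    ∑ i : Fin n, Real.exp (⟪Function.update ψ a w₀ i, c a''⟫ + b i) with hZ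
  have hZpos : ∀ a'', 0 < Z a'' :=
    fun a'' => Finset.sum_pos (fun i _ => Real.exp_pos _) ⟨a, Finset.mem_univ a⟩
  set q : Fin n → ℝ := fun a'' => (Z a'')⁻¹ * Real.exp (t a'') with hq
  -- derivative of the linear pieces
  have hlin : ∀ a'' i : Fin n,
      HasFDerivAt (fun w : EuclideanSpace ℝ (Fin d) => ⟪Function.update ψ a w i, c a''⟫ + b i)
        (if i = a then (innerSL ℝ (c a'') : EuclideanSpace ℝ (Fin d) →L[ℝ] ℝ) else 0) w₀ := by
    intro a'' i
    by_cases h : i = a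
    · simp only [if_pos h]
      have heq : (fun w : EuclideanSpace ℝ (Fin d) => ⟪Function.update ψ a w i, c a''⟫ + b i)
          = fun w : EuclideanSpace ℝ (Fin d) => (innerSL ℝ (c a'')) w + b i := by
        funext w
        rw [h, Function.update_self, innerSL_apply_apply, real_inner_comm]
      rw [heq]
      exact ((innerSL ℝ (c a'')).hasFDerivAt).add_const _
    · simp only [if_neg h]
      have heq : (fun w : EuclideanSpace ℝ (Fin d) => ⟪Function.update ψ a w i, c a''⟫ + b i)
          = fun _ : EuclideanSpace ℝ (Fin d) => ⟪ψ i, c a''⟫ + b i := by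
        funext w
        rw [Function.update_of_ne h]
      rw [heq]
      exact hasFDerivAt_const _ _
  have hta : ∀ a'' : Fin n, ⟪Function.update ψ a w₀ a, c a''⟫ + b a = t a'' := by
    intro a''; simp [hw₀, ht]
  -- derivative of log-sum-exp
  have hlog : ∀ a'' : Fin n,
      HasFDerivAt (fun w : EuclideanSpace ℝ (Fin d) => Real.log (∑ i : Fin n,
          Real.exp (⟪Function.update ψ a w i, c a''⟫ + b i)))
        (q a'' • (innerSL ℝ (c a'') : EuclideanSpace ℝ (Fin d) →L[ℝ] ℝ)) w₀ := by
    intro a''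
    have hsum : HasFDerivAt (fun w : EuclideanSpace ℝ (Fin d) => ∑ i : Fin n,
        Real.exp (⟪Function.update ψ a w i, c a''⟫ + b i))
        (∑ i : Fin n, Real.exp (⟪Function.update ψ a w₀ i, c a''⟫ + b i) •
          (if i = a then (innerSL ℝ (c a'') : EuclideanSpace ℝ (Fin d) →L[ℝ] ℝ) else 0)) w₀ :=
      HasFDerivAt.fun_sum (fun i _ => (hlin a'' i).exp)
    have hsum' : (∑ i : Fin n, Real.exp (⟪Function.update ψ a w₀ i, c a''⟫ + b i) •
          (if i = a then (innerSL ℝ (c a'') : EuclideanSpace ℝ (Fin d) →L[ℝ] ℝ) else 0))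
        = Real.exp (t a'') • (innerSL ℝ (c a'') : EuclideanSpace ℝ (Fin d) →L[ℝ] ℝ) := by
      rw [Finset.sum_eq_single a]
      · rw [if_pos rfl, hta a'']
      · intro i _ hne
        rw [if_neg hne, smul_zero]
      · intro h; exact absurd (Finset.mem_univ a) h
    rw [hsum'] at hsum
    have h2 := hsum.log (ne_of_gt (hZpos a''))
    rw [smul_smul] at h2
    exact h2
  -- derivative of each summand
  have hterm : ∀ a'' : Fin n,
      HasFDerivAt (fun w : EuclideanSpace ℝ (Fin d) =>
        -(⟪Function.update ψ a w a'', c a''⟫ + b a'') +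
          Real.log (∑ i : Fin n, Real.exp (⟪Function.update ψ a w i, c a''⟫ + b i)))
        (-(if a'' = a then (innerSL ℝ (c a'') : EuclideanSpace ℝ (Fin d) →L[ℝ] ℝ) else 0) +
          q a'' • (innerSL ℝ (c a'') : EuclideanSpace ℝ (Fin d) →L[ℝ] ℝ)) w₀ :=
    fun a'' => ((hlin a'' a'').neg).add (hlog a'')
  have hgfd : HasFDerivAt g
      (∑ a'' : Fin n, (-(if a'' = a then (innerSL ℝ (c a'') : EuclideanSpace ℝ (Fin d) →L[ℝ] ℝ) else 0) +
        q a'' • (innerSL ℝ (c a'') : EuclideanSpace ℝ (Fin d) →L[ℝ] ℝ))) w₀ := by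
    rw [hg]
    exact HasFDerivAt.fun_sum (fun a'' _ => hterm a'')
  set v : EuclideanSpace ℝ (Fin d) := -c a + ∑ a'' : Fin n, q a'' • c a'' with hv
  have hL : (∑ a'' : Fin n, (-(if a'' = a then (innerSL ℝ (c a'') : EuclideanSpace ℝ (Fin d) →L[ℝ] ℝ) else 0) +
        q a'' • (innerSL ℝ (c a'') : EuclideanSpace ℝ (Fin d) →L[ℝ] ℝ)))
      = InnerProductSpace.toDual ℝ (EuclideanSpace ℝ (Fin d)) v := by
    ext u
    simp only [ContinuousLinearMap.coe_sum', Finset.sum_apply,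
      ContinuousLinearMap.add_apply, ContinuousLinearMap.neg_apply,
      ContinuousLinearMap.smul_apply, innerSL_apply_apply, ContinuousLinearMap.zero_apply,
      InnerProductSpace.toDual_apply_apply, hv, inner_add_left, inner_neg_left, sum_inner,
      inner_smul_left, RCLike.conj_to_real, apply_ite (fun x : EuclideanSpace ℝ (Fin d) →L[ℝ] ℝ => x u)]
    rw [Finset.sum_add_distrib]
    congr 1
    simp [apply_ite Neg.neg, Finset.sum_ite_eq']
  have hgrad : HasGradientAt g v w₀ := by
    rw [hasGradientAt_iff_hasFDerivAt, ← hL]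
    exact hgfd
  rw [hgrad.gradient]
  -- now compute the inner product
  have hsum : ⟪c a, ∑ a'' : Fin n, q a'' • c a''⟫ = q a * ⟪c a, c a⟫ := by
    rw [inner_sum]
    rw [Finset.sum_eq_single a]
    · rw [real_inner_smul_right]
    · intro i _ hne
      rw [real_inner_smul_right, hortho a i (Ne.symm hne), mul_zero]
    · intro h; exact absurd (Finset.mem_univ a) h
  have hinner : ⟪c a, -v⟫ = (1 - q a) * ⟪c a, c a⟫ := by
    rw [hv, neg_add, inner_add_right, neg_neg, inner_neg_right, hsum]
    ring
  rw [hinner]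
  have hqa : q a < 1 := by
    show (Z a)⁻¹ * Real.exp (t a) < 1
    rw [inv_mul_eq_div, div_lt_one (hZpos a)]
    obtain ⟨j, hj⟩ : ∃ j : Fin n, j ≠ a := by
      haveI : Nontrivial (Fin n) := Fin.nontrivial_iff_two_le.mpr hn
      exact exists_ne a
    calc Real.exp (t a) = Real.exp (⟪Function.update ψ a w₀ a, c a⟫ + b a) := by
          rw [hta a]
      _ < Z a := by
          show Real.exp (⟪Function.update ψ a w₀ a, c a⟫ + b a) <
            ∑ i : Fin n, Real.exp (⟪Function.update ψ a w₀ i, c a⟫ + b i)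
          exact Finset.single_lt_sum
            (f := fun k : Fin n => Real.exp (⟪Function.update ψ a w₀ k, c a⟫ + b k))
            hj (Finset.mem_univ a) (Finset.mem_univ j)
            (Real.exp_pos _) (fun k _ _ => (Real.exp_pos _).le)
  have hcc : (0:ℝ) < ⟪c a, c a⟫ := by
    rw [real_inner_self_eq_norm_mul_norm]
    exact mul_pos (norm_pos_iff.mpr hca) (norm_pos_iff.mpr hca)
  have : (0:ℝ) < 1 - q a := by linarith
  positivity
end

section
/- Fix a class a ∈ Fin n. For every w ∈ EuclideanSpace ℝ (Fin d), the function g has gradient −c a + D(w) at w (i.e., HasGradientAt g (−c a + D w) w), where D(w) = Σ_{a'' ∈ Fin n} s_{a''}(w) • c a'' and s_{a''}(w) = Real.exp (⟪w, c a''⟫ + b a) / Σ_{ã ∈ Fin n} Real.exp (⟪Ψ_w ã, c a''⟫ + b ã). In other words, the gradient of the support loss with respect to the head weight of class a equals −C^{(a)} + D^{(a)}. -/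
open RealInnerProductSpace

/-- Fix a class `a ∈ Fin n`. For every `w`, the 1-shot support
cross-entropy loss `g` (as a function of the `a`-th head weight) has gradient
`-c a + D w` at `w`, where `D w = ∑ a'', s a'' w • c a''` with softmax weights
`s a'' w = exp (⟪w, c a''⟫ + b a) / ∑ a', exp (⟪Ψ_w a', c a''⟫ + b a')` and
`Ψ_w = Function.update ψ a w`. -/
theorem hasGradientAt_support_loss
    (n d : ℕ) (a : Fin n)
    (c ψ : Fin n → EuclideanSpace ℝ (Fin d)) (b : Fin n → ℝ)
    (g : EuclideanSpace ℝ (Fin d) → ℝ)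
    (hg : g = fun w =>
      ∑ a'' : Fin n,
        (-(⟪Function.update ψ a w a'', c a''⟫ + b a'') +
          Real.log (∑ a' : Fin n,
            Real.exp (⟪Function.update ψ a w a', c a''⟫ + b a'))))
    (s : Fin n → EuclideanSpace ℝ (Fin d) → ℝ)
    (hs : s = fun a'' w =>
      Real.exp (⟪w, c a''⟫ + b a) /
        ∑ a' : Fin n, Real.exp (⟪Function.update ψ a w a', c a''⟫ + b a'))
    (D : EuclideanSpace ℝ (Fin d) → EuclideanSpace ℝ (Fin d))
    (hD : D = fun w => ∑ a'' : Fin n, s a'' w • c a'') :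
    ∀ w : EuclideanSpace ℝ (Fin d), HasGradientAt g (-c a + D w) w := by
  classical
  intro w
  set K : Fin n → ℝ := fun a'' =>
    ∑ a' ∈ Finset.univ.erase a, Real.exp (⟪ψ a', c a''⟫ + b a') with hK
  have hsum : ∀ (a'' : Fin n) (v : EuclideanSpace ℝ (Fin d)),
      (∑ a' : Fin n, Real.exp (⟪Function.update ψ a v a', c a''⟫ + b a'))
        = Real.exp (⟪v, c a''⟫ + b a) + K a'' := by
    intro a'' v
    rw [← Finset.add_sum_erase _ _ (Finset.mem_univ a)]
    simp only [Function.update_self, hK]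
    congr 1
    refine Finset.sum_congr rfl fun a' ha' => ?_
    rw [Function.update_of_ne (Finset.ne_of_mem_erase ha')]
  have hKpos : ∀ a'' : Fin n, 0 < Real.exp (⟪w, c a''⟫ + b a) + K a'' := by
    intro a''
    have h1 : (0:ℝ) ≤ K a'' := Finset.sum_nonneg fun _ _ => (Real.exp_pos _).le
    linarith [Real.exp_pos (⟪w, c a''⟫ + b a)]
  have hg' : g = fun v => ∑ a'' : Fin n,
      (-((if a'' = a then ⟪v, c a''⟫ else ⟪ψ a'', c a''⟫) + b a'') +
        Real.log (Real.exp (⟪v, c a''⟫ + b a) + K a'')) := by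
    rw [hg]
    funext v
    refine Finset.sum_congr rfl fun a'' _ => ?_
    rw [hsum a'' v, Function.update_apply,
      apply_ite (fun u : EuclideanSpace ℝ (Fin d) => ⟪u, c a''⟫)]
  have hterm : ∀ a'' : Fin n, HasFDerivAt
      (fun v : EuclideanSpace ℝ (Fin d) =>
        (-((if a'' = a then ⟪v, c a''⟫ else ⟪ψ a'', c a''⟫) + b a'') +
          Real.log (Real.exp (⟪v, c a''⟫ + b a) + K a'')))
      ((if a'' = a then -(innerSL ℝ (c a'')) else 0) +
        s a'' w • innerSL ℝ (c a'')) w := by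
    intro a''
    have hinner : HasFDerivAt
        (fun v : EuclideanSpace ℝ (Fin d) => ⟪v, c a''⟫) (innerSL ℝ (c a'')) w := by
      have h := (innerSL ℝ (c a'')).hasFDerivAt (x := w)
      simpa only [coe_innerSL_apply, real_inner_comm] using h
    have h2 : HasFDerivAt
        (fun v : EuclideanSpace ℝ (Fin d) => Real.exp (⟪v, c a''⟫ + b a) + K a'')
        (Real.exp (⟪w, c a''⟫ + b a) • innerSL ℝ (c a'')) w :=
      ((hinner.add_const (b a)).exp).add_const (K a'')
    have h3 := h2.log (ne_of_gt (hKpos a''))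
    have h3' : HasFDerivAt
        (fun v : EuclideanSpace ℝ (Fin d) =>
          Real.log (Real.exp (⟪v, c a''⟫ + b a) + K a''))
        (s a'' w • innerSL ℝ (c a'')) w := by
      have heq : s a'' w • innerSL ℝ (c a'') =
          (Real.exp (⟪w, c a''⟫ + b a) + K a'')⁻¹ •
            (Real.exp (⟪w, c a''⟫ + b a) • innerSL ℝ (c a'')) := by
        rw [smul_smul, hs]
        simp only [hsum a'' w]
        rw [div_eq_inv_mul]
      rw [heq]
      exact h3
    have hfirst : HasFDerivAt
        (fun v : EuclideanSpace ℝ (Fin d) =>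
          -((if a'' = a then ⟪v, c a''⟫ else ⟪ψ a'', c a''⟫) + b a''))
        (if a'' = a then -(innerSL ℝ (c a'')) else 0) w := by
      by_cases h : a'' = a
      · simpa only [h, if_true, Pi.neg_def] using (hinner.add_const (b a'')).neg
      · simpa only [h, if_false] using
          hasFDerivAt_const (-(⟪ψ a'', c a''⟫ + b a'')) w
      -- note: in the else branch a'' ≠ a so the expression is constant
    exact hfirst.add h3'
  have hsumderiv : HasFDerivAt g
      (∑ a'' : Fin n, ((if a'' = a then -(innerSL ℝ (c a'')) else 0) +
        s a'' w • innerSL ℝ (c a''))) w := by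
    rw [hg']
    exact HasFDerivAt.fun_sum fun a'' _ => hterm a''
  rw [hasGradientAt_iff_hasFDerivAt]
  refine (hsumderiv.congr_fderiv ?_)
  symm
  ext v
  simp only [InnerProductSpace.toDual_apply_apply, inner_add_left, inner_neg_left,
    hD, sum_inner, inner_smul_left, RCLike.conj_to_real, ContinuousLinearMap.sum_apply,
    ContinuousLinearMap.add_apply, ContinuousLinearMap.smul_apply, innerSL_apply_apply,
    ContinuousLinearMap.neg_apply, ContinuousLinearMap.zero_apply, smul_eq_mul,
    apply_ite (fun L : EuclideanSpace ℝ (Fin d) →L[ℝ] ℝ => L v)]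
  rw [Finset.sum_add_distrib, Finset.sum_ite_eq' Finset.univ a
    (fun x => -(inner ℝ (c x) v : ℝ))]
  simp
end

section
/- Suppose the contextualizations c i (i ∈ Fin n) are pairwise orthogonal (⟪c i, c j⟫ = 0 whenever i ≠ j). Then for each class a ∈ Fin n, ⟪c a, c a − D⟫ = (1 − s a) · ‖c a‖², where s and D are the softmax coefficients and softmax-weighted average defined from ψ, b, c. Consequently, if moreover n ≥ 2 and c a ≠ 0, then ⟪c a, c a − D⟫ > 0. -/
open RealInnerProductSpace

/-- If the contextualizations `c i` are pairwise orthogonal, then for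
each class `a`, `⟪c a, c a - D⟫ = (1 - s a) * ‖c a‖²`, where `s` are the softmax
coefficients and `D` the softmax-weighted average defined from `ψ, b, c`. Consequently,
if moreover `n ≥ 2` and `c a ≠ 0`, then `⟪c a, c a - D⟫ > 0`. -/
theorem orthogonal_contextualizations_inner_sub_softmax
    (n d : ℕ)
    (c ψ : Fin n → EuclideanSpace ℝ (Fin d)) (b : Fin n → ℝ)
    (hortho : ∀ i j : Fin n, i ≠ j → ⟪c i, c j⟫ = 0)
    (a : Fin n)
    (s : Fin n → ℝ)
    (hs : s = fun a'' =>
      Real.exp (⟪ψ a, c a''⟫ + b a) /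
        ∑ a' : Fin n, Real.exp (⟪ψ a', c a''⟫ + b a'))
    (D : EuclideanSpace ℝ (Fin d))
    (hD : D = ∑ a'' : Fin n, s a'' • c a'') :
    ⟪c a, c a - D⟫ = (1 - s a) * ‖c a‖ ^ 2 ∧
      (2 ≤ n → c a ≠ 0 → 0 < ⟪c a, c a - D⟫) := by
  have hcaD : ⟪c a, D⟫ = s a * ‖c a‖ ^ 2 := by
    rw [hD, inner_sum]
    rw [Finset.sum_eq_single a]
    · rw [real_inner_smul_right, real_inner_self_eq_norm_sq]
    · intro j _ hj
      rw [real_inner_smul_right, real_inner_comm, hortho j a hj, mul_zero]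
    · simp
  have hmain : ⟪c a, c a - D⟫ = (1 - s a) * ‖c a‖ ^ 2 := by
    rw [inner_sub_right, hcaD, real_inner_self_eq_norm_sq]
    ring
  refine ⟨hmain, fun hn hca => ?_⟩
  rw [hmain]
  have hnorm : 0 < ‖c a‖ ^ 2 := by
    have := norm_pos_iff.mpr hca; positivity
  have hsa : s a < 1 := by
    rw [hs]
    have hne : Finset.univ.Nonempty := ⟨a, Finset.mem_univ a⟩
    -- pick another index
    obtain ⟨j, hja⟩ : ∃ j : Fin n, j ≠ a :=
      Fintype.exists_ne_of_one_lt_card (by simpa using (show 1 < n by omega)) a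
    have hsum : Real.exp (⟪ψ a, c a⟫ + b a) <
        ∑ a' : Fin n, Real.exp (⟪ψ a', c a⟫ + b a') := by
      have h := Finset.sum_lt_sum_of_subset (f := fun a' => Real.exp (⟪ψ a', c a⟫ + b a'))
        (Finset.singleton_subset_iff.mpr (Finset.mem_univ a))
        (Finset.mem_univ j) (by simpa using hja)
        (Real.exp_pos _) (fun k _ _ => (Real.exp_pos _).le)
      simpa using h
    exact (div_lt_one (lt_trans (Real.exp_pos _) hsum)).mpr hsum
  nlinarith
end
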